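/- If K is the uniform kernel K(u) = (1/2)𝟙{|u|≤1} and K_h(u) = (1/h)K(u/h) for h > 0, then the convolution ℓ_h = ρ_τ * K_h satisfies ℓ_h(u) = (h/2)·U(u/h) + (τ − 1/2)u, where U(u) = (u²/2 + 1/2)𝟙{|u|≤1} + |u|𝟙{|u|>1}. -/
import Mathlib


open MeasureTheory

/-- The quantile check function ρ_τ. -/
noncomputable def checkFn (τ u : ℝ) : ℝ := u * (τ - if u < 0 then 1 else 0)

/-- The uniform kernel K(u) = (1/2)·𝟙{|u| ≤ 1}. -/
noncomputable def unifK (u : ℝ) : ℝ := if |u| ≤ 1 then 1/2 else 0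

/-- The Huber-type function U. -/
noncomputable def Ufn (u : ℝ) : ℝ := if |u| ≤ 1 then u^2/2 + 1/2 else |u|

lemma checkFn_eq (τ v : ℝ) : checkFn τ v = (τ - 1/2) * v + |v| / 2 := by
  unfold checkFn
  split_ifs with hv
  · rw [abs_of_neg hv]; ring
  · rw [abs_of_nonneg (not_lt.mp hv)]; ring

lemma intAbs_nonneg (a b : ℝ) (ha : 0 ≤ a) (hab : a ≤ b) :
    ∫ v in a..b, |v| = (b^2 - a^2)/2 := by
  rw [intervalIntegral.integral_congr (g := fun v => v)
    (fun v hv => abs_of_nonneg (by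
      rw [Set.uIcc_of_le hab] at hv; linarith [hv.1]))]
  exact integral_id

lemma intAbs_nonpos (a b : ℝ) (hb : b ≤ 0) (hab : a ≤ b) :
    ∫ v in a..b, |v| = (a^2 - b^2)/2 := by
  rw [intervalIntegral.integral_congr (g := fun v => -v)
    (fun v hv => abs_of_nonpos (by
      rw [Set.uIcc_of_le hab] at hv; linarith [hv.2]))]
  rw [intervalIntegral.integral_neg, integral_id]; ring

lemma intAbs_split (a b : ℝ) (ha : a ≤ 0) (hb : 0 ≤ b) :
    ∫ v in a..b, |v| = (a^2 + b^2)/2 := by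
  have i1 : IntervalIntegrable (fun v : ℝ => |v|) volume a 0 :=
    Continuous.intervalIntegrable (by continuity) a 0
  have i2 : IntervalIntegrable (fun v : ℝ => |v|) volume 0 b :=
    Continuous.intervalIntegrable (by continuity) 0 b
  rw [← intervalIntegral.integral_add_adjacent_intervals i1 i2,
    intAbs_nonpos a 0 le_rfl ha, intAbs_nonneg 0 b le_rfl hb]
  ring

theorem smoothed_loss_uniform (τ h : ℝ) (hτ : τ ∈ Set.Ioo (0:ℝ) 1) (hh : 0 < h) (u : ℝ) :
    (∫ v : ℝ, checkFn τ v * ((1/h) * unifK ((v - u)/h))) =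
      (h/2) * Ufn (u/h) + (τ - 1/2) * u := by
  have hK : (fun v : ℝ => checkFn τ v * ((1/h) * unifK ((v - u)/h))) =
      Set.indicator (Set.Icc (u-h) (u+h)) (fun v => checkFn τ v * (1/(2*h))) := by
    funext v
    rw [Set.indicator_apply]
    unfold unifK
    have hiff : |(v-u)/h| ≤ 1 ↔ v ∈ Set.Icc (u-h) (u+h) := by
      rw [abs_div, abs_of_pos hh, div_le_one hh, abs_le, Set.mem_Icc]
      constructor <;> rintro ⟨h1, h2⟩ <;> constructor <;> linarith
    by_cases hv : v ∈ Set.Icc (u-h) (u+h)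
    · rw [if_pos (hiff.mpr hv), if_pos hv]; ring
    · rw [if_neg (fun hc => hv (hiff.mp hc)), if_neg hv]; ring
  have hab : u - h ≤ u + h := by linarith
  rw [hK, integral_indicator measurableSet_Icc,
    MeasureTheory.integral_Icc_eq_integral_Ioc,
    ← intervalIntegral.integral_of_le hab]
  simp only [checkFn_eq]
  have key : ∀ v : ℝ, ((τ - 1/2) * v + |v| / 2) * (1/(2*h)) =
      ((τ - 1/2) * (1/(2*h))) * v + (1/(4*h)) * |v| := by
    intro v; field_simp; ring
  simp only [key]
  have i1 : IntervalIntegrable (fun v : ℝ => ((τ - 1/2) * (1/(2*h))) * v) volume (u-h) (u+h) :=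
    Continuous.intervalIntegrable (by continuity) _ _
  have i2 : IntervalIntegrable (fun v : ℝ => (1/(4*h)) * |v|) volume (u-h) (u+h) :=
    Continuous.intervalIntegrable (by continuity) _ _
  rw [intervalIntegral.integral_add i1 i2, intervalIntegral.integral_const_mul,
    intervalIntegral.integral_const_mul, integral_id]
  have hUiff : |u/h| ≤ 1 ↔ |u| ≤ h := by
    rw [abs_div, abs_of_pos hh, div_le_one hh]
  unfold Ufn
  by_cases hu : |u| ≤ h
  · rw [if_pos (hUiff.mpr hu)]
    obtain ⟨h1, h2⟩ := abs_le.mp hu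
    rw [intAbs_split (u-h) (u+h) (by linarith) (by linarith)]
    field_simp
    ring
  · rw [if_neg (fun hc => hu (hUiff.mp hc)), abs_div, abs_of_pos hh]
    rcases le_or_gt u 0 with hu0 | hu0
    · have : h < -u := by rw [abs_of_nonpos hu0] at hu; linarith [not_le.mp hu]
      rw [intAbs_nonpos (u-h) (u+h) (by linarith) hab, abs_of_nonpos hu0]
      field_simp
      ring
    · have : h < u := by rw [abs_of_pos hu0] at hu; linarith [not_le.mp hu]
      rw [intAbs_nonneg (u-h) (u+h) (by linarith) hab, abs_of_pos hu0]
      field_simp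
      ring
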